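/- For every pre-ordered Banach space (X, X⁺) there exists a free Banach lattice over (X, X⁺): there exist a Banach lattice F and a positive contraction j : X → F such that for every Banach lattice G and every positive contraction φ : X → G there exists a unique contractive vector lattice homomorphism φ̄ : F → G with φ̄ ∘ j = φ. -/

import Mathlib

/-- The class `NormedLatticeAddCommGroup` as it stood in Mathlib (Dec 2024); it has since been removed. -/
class NormedLatticeAddCommGroup (α : Type*) extends NormedAddCommGroup α, Lattice α where
  add_le_add_left : ∀ a b : α, a ≤ b → ∀ c : α, c + a ≤ c + b
  solid : ∀ a b : α, |a| ≤ |b| → ‖a‖ ≤ ‖b‖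

instance NormedLatticeAddCommGroup.toIsOrderedAddMonoid' {α : Type*}
    [NormedLatticeAddCommGroup α] : IsOrderedAddMonoid α where
  add_le_add_left a b h c := by
    have := NormedLatticeAddCommGroup.add_le_add_left a b h c
    simpa [add_comm] using this

instance NormedLatticeAddCommGroup.toHasSolidNorm' {α : Type*}
    [NormedLatticeAddCommGroup α] : HasSolidNorm α :=
  ⟨fun a b h => NormedLatticeAddCommGroup.solid a b h⟩

open scoped ENNReal

section LpLattice

variable {ι : Type} {E : ι → Type} [∀ i, NormedLatticeAddCommGroup (E i)]

lemma memℓp_infty_of_bound {f : ∀ i, E i} (C : ℝ) (h : ∀ i, ‖f i‖ ≤ C) : Memℓp f ∞ :=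
  memℓp_infty ⟨C, by rintro x ⟨i, rfl⟩; exact h i⟩

noncomputable instance lpInftyMax : Max (lp E ∞) :=
  ⟨fun a b => ⟨fun i => a i ⊔ b i, memℓp_infty_of_bound (‖a‖ + ‖b‖) fun i =>
    (norm_sup_le_add (a i) (b i)).trans
      (add_le_add (lp.norm_apply_le_norm ENNReal.top_ne_zero a i)
        (lp.norm_apply_le_norm ENNReal.top_ne_zero b i))⟩⟩

noncomputable instance lpInftyMin : Min (lp E ∞) :=
  ⟨fun a b => ⟨fun i => a i ⊓ b i, memℓp_infty_of_bound (‖a‖ + ‖b‖) fun i =>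
    (norm_inf_le_add (a i) (b i)).trans
      (add_le_add (lp.norm_apply_le_norm ENNReal.top_ne_zero a i)
        (lp.norm_apply_le_norm ENNReal.top_ne_zero b i))⟩⟩

@[simp] lemma lp.coeFn_sup (a b : lp E ∞) : ⇑(a ⊔ b) = ⇑a ⊔ ⇑b := rfl
@[simp] lemma lp.coeFn_inf (a b : lp E ∞) : ⇑(a ⊓ b) = ⇑a ⊓ ⇑b := rfl

lemma lp.coeFn_injective : Function.Injective fun (f : lp E ∞) => ⇑f :=
  fun _ _ h => lp.ext h

instance lpInftyLE : LE (lp E ∞) := ⟨fun a b => ∀ i, a i ≤ b i⟩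

instance lpInftyLT : LT (lp E ∞) := ⟨fun a b => ⇑a < ⇑b⟩

noncomputable instance lpInftyLattice : Lattice (lp E ∞) :=
  Function.Injective.lattice _ lp.coeFn_injective Iff.rfl Iff.rfl lp.coeFn_sup lp.coeFn_inf

lemma lp.le_iff {a b : lp E ∞} : a ≤ b ↔ ∀ i, a i ≤ b i := Iff.rfl

lemma lp.coeFn_abs (a : lp E ∞) : ⇑|a| = fun i => |a i| := by
  ext i
  change (a ⊔ -a) i = a i ⊔ -(a i)
  rfl

noncomputable instance lpInftyNormedLattice : NormedLatticeAddCommGroup (lp E ∞) where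
  add_le_add_left a b h c := fun i => by
    have := h i
    simp only [lp.coeFn_add, Pi.add_apply]
    exact add_le_add_right this _
  solid a b h := by
    refine lp.norm_le_of_forall_le (norm_nonneg b) fun i => ?_
    refine le_trans (HasSolidNorm.solid ?_) (lp.norm_apply_le_norm ENNReal.top_ne_zero b i)
    have := h i
    simpa [lp.coeFn_abs] using this

end LpLattice

open scoped ENNReal

section SupSubmodule

variable {W : Type} [NormedLatticeAddCommGroup W] [NormedSpace ℝ W]

/-- The smallest submodule of `W` containing `s` and closed under `⊔`. -/
def sublatticeSpan (s : Set W) : Submodule ℝ W :=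
  sInf {S : Submodule ℝ W | s ⊆ S ∧ ∀ ⦃a b : W⦄, a ∈ S → b ∈ S → a ⊔ b ∈ S}

lemma subset_sublatticeSpan (s : Set W) : s ⊆ sublatticeSpan s := fun _ hx =>
  Submodule.mem_sInf.2 fun _ hS => hS.1 hx

lemma sup_mem_sublatticeSpan {s : Set W} {a b : W}
    (ha : a ∈ sublatticeSpan s) (hb : b ∈ sublatticeSpan s) : a ⊔ b ∈ sublatticeSpan s :=
  Submodule.mem_sInf.2 fun S hS =>
    hS.2 (Submodule.mem_sInf.1 ha S hS) (Submodule.mem_sInf.1 hb S hS)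

lemma sublatticeSpan_le {s : Set W} {S : Submodule ℝ W} (h1 : s ⊆ S)
    (h2 : ∀ ⦃a b : W⦄, a ∈ S → b ∈ S → a ⊔ b ∈ S) : sublatticeSpan s ≤ S :=
  sInf_le ⟨h1, h2⟩

/-- The smallest closed submodule of `W` containing `s` and closed under `⊔`. -/
def sublatticeSpanCl (s : Set W) : Submodule ℝ W :=
  (sublatticeSpan s).topologicalClosure

lemma subset_sublatticeSpanCl (s : Set W) : s ⊆ sublatticeSpanCl s :=
  (subset_sublatticeSpan s).trans (Submodule.le_topologicalClosure _)

lemma isClosed_sublatticeSpanCl (s : Set W) : IsClosed (sublatticeSpanCl s : Set W) :=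
  Submodule.isClosed_topologicalClosure _

lemma sup_mem_sublatticeSpanCl {s : Set W} : ∀ ⦃a b : W⦄,
    a ∈ sublatticeSpanCl s → b ∈ sublatticeSpanCl s → a ⊔ b ∈ sublatticeSpanCl s := by
  intro a b ha hb
  have : a ∈ closure (sublatticeSpan s : Set W) := ha
  have hb' : b ∈ closure (sublatticeSpan s : Set W) := hb
  exact map_mem_closure₂ continuous_sup this hb'
    (fun x hx y hy => sup_mem_sublatticeSpan hx hy)

lemma inf_mem_sublatticeSpanCl {s : Set W} : ∀ ⦃a b : W⦄,
    a ∈ sublatticeSpanCl s → b ∈ sublatticeSpanCl s → a ⊓ b ∈ sublatticeSpanCl s := by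
  intro a b ha hb
  have : a ⊓ b = -(-a ⊔ -b) := by rw [neg_sup, neg_neg, neg_neg]
  rw [this]
  exact neg_mem (sup_mem_sublatticeSpanCl (neg_mem ha) (neg_mem hb))

lemma sublatticeSpanCl_le {s : Set W} {S : Submodule ℝ W} (h1 : s ⊆ S)
    (h2 : ∀ ⦃a b : W⦄, a ∈ S → b ∈ S → a ⊔ b ∈ S) (h3 : IsClosed (S : Set W)) :
    sublatticeSpanCl s ≤ S :=
  Submodule.topologicalClosure_minimal _ (sublatticeSpan_le h1 h2) h3

noncomputable instance sclLattice (s : Set W) : Lattice ↥(sublatticeSpanCl s) :=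
  Subtype.lattice (fun _ _ ha hb => sup_mem_sublatticeSpanCl ha hb)
    (fun _ _ ha hb => inf_mem_sublatticeSpanCl ha hb)

@[simp] lemma scl_coe_sup {s : Set W} (a b : ↥(sublatticeSpanCl s)) :
    ((a ⊔ b : ↥(sublatticeSpanCl s)) : W) = (a : W) ⊔ (b : W) := rfl

@[simp] lemma scl_coe_abs {s : Set W} (a : ↥(sublatticeSpanCl s)) :
    ((|a| : ↥(sublatticeSpanCl s)) : W) = |(a : W)| := rfl

lemma scl_le_iff {s : Set W} {a b : ↥(sublatticeSpanCl s)} : a ≤ b ↔ (a : W) ≤ (b : W) :=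
  Iff.rfl

noncomputable instance sclNLACG (s : Set W) :
    NormedLatticeAddCommGroup ↥(sublatticeSpanCl s) :=
  { (inferInstance : NormedAddCommGroup ↥(sublatticeSpanCl s)),
    (inferInstance : Lattice ↥(sublatticeSpanCl s)) with
    add_le_add_left := fun a b h c =>
      show ((c + a : ↥(sublatticeSpanCl s)) : W) ≤ ((c + b : ↥(sublatticeSpanCl s)) : W) from by
        push_cast
        exact add_le_add_right h _
    solid := fun a b h => by
      have h' : |(a : W)| ≤ |(b : W)| := by
        rw [← scl_coe_abs, ← scl_coe_abs]; exact h
      show ‖(a : W)‖ ≤ ‖(b : W)‖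
      exact HasSolidNorm.solid h' }

instance sclComplete [CompleteSpace W] (s : Set W) :
    CompleteSpace ↥(sublatticeSpanCl s) :=
  (isClosed_sublatticeSpanCl s).completeSpace_coe

end SupSubmodule

section Card

open Cardinal

variable {W : Type} [NormedLatticeAddCommGroup W] [NormedSpace ℝ W]

/-- Fueled stages generating the sublattice span. -/
def latStages (s : Set W) : ℕ → Set W
  | 0 => insert 0 s
  | n + 1 =>
      latStages s n ∪ Set.image2 (· + ·) (latStages s n) (latStages s n)
        ∪ Set.image2 (· ⊔ ·) (latStages s n) (latStages s n)
        ∪ Set.image2 (· • ·) (Set.univ : Set ℝ) (latStages s n)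

lemma latStages_subset_succ (s : Set W) (n : ℕ) : latStages s n ⊆ latStages s (n + 1) := by
  intro x hx
  rw [latStages]
  exact Or.inl (Or.inl (Or.inl hx))

lemma latStages_mono (s : Set W) : Monotone (latStages s) :=
  monotone_nat_of_le_succ fun n => latStages_subset_succ s n

/-- The union of the stages, as a submodule. -/
def latStagesUnion (s : Set W) : Submodule ℝ W where
  carrier := ⋃ n, latStages s n
  zero_mem' := Set.mem_iUnion.2 ⟨0, Or.inl rfl⟩
  add_mem' := by
    rintro a b ha hb
    obtain ⟨m, hm⟩ := Set.mem_iUnion.1 ha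
    obtain ⟨n, hn⟩ := Set.mem_iUnion.1 hb
    refine Set.mem_iUnion.2 ⟨max m n + 1, ?_⟩
    exact Or.inl (Or.inl (Or.inr (Set.mem_image2_of_mem
      (latStages_mono s (le_max_left m n) hm) (latStages_mono s (le_max_right m n) hn))))
  smul_mem' := by
    intro r a ha
    obtain ⟨n, hn⟩ := Set.mem_iUnion.1 ha
    refine Set.mem_iUnion.2 ⟨n + 1, ?_⟩
    exact Or.inr (Set.mem_image2_of_mem (Set.mem_univ r) hn)

lemma sup_mem_latStagesUnion (s : Set W) : ∀ ⦃a b : W⦄,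
    a ∈ latStagesUnion s → b ∈ latStagesUnion s → a ⊔ b ∈ latStagesUnion s := by
  intro a b ha hb
  obtain ⟨m, hm⟩ := Set.mem_iUnion.1 ha
  obtain ⟨n, hn⟩ := Set.mem_iUnion.1 hb
  refine Set.mem_iUnion.2 ⟨max m n + 1, ?_⟩
  exact Or.inl (Or.inr (Set.mem_image2_of_mem
    (latStages_mono s (le_max_left m n) hm) (latStages_mono s (le_max_right m n) hn)))

lemma subset_latStagesUnion (s : Set W) : s ⊆ latStagesUnion s := fun x hx =>
  Set.mem_iUnion.2 ⟨0, Or.inr hx⟩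

lemma mk_latStages_le (s : Set W) (n : ℕ) : #(latStages s n) ≤ #s + 𝔠 := by
  have hinf : ℵ₀ ≤ #s + 𝔠 := aleph0_le_continuum.trans le_add_self
  induction n with
  | zero =>
      refine (Cardinal.mk_insert_le).trans ?_
      exact add_le_add_right (one_le_aleph0.trans aleph0_le_continuum) _
  | succ n ih =>
      have himg : ∀ f : W → W → W, #(Set.image2 f (latStages s n) (latStages s n)) ≤ #s + 𝔠 :=
        fun f => Cardinal.mk_image2_le.trans ((mul_le_mul' ih ih).trans (mul_eq_self hinf).le)
      have hsmul : #(Set.image2 (· • ·) (Set.univ : Set ℝ) (latStages s n)) ≤ #s + 𝔠 := by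
        refine Cardinal.mk_image2_le.trans ?_
        have : #(Set.univ : Set ℝ) = 𝔠 := by rw [Cardinal.mk_univ, Cardinal.mk_real]
        rw [this]
        exact (mul_le_mul' (le_add_self) ih).trans (mul_eq_self hinf).le
      refine (Cardinal.mk_union_le _ _).trans ?_
      refine (add_le_add ((Cardinal.mk_union_le _ _).trans (add_le_add ((Cardinal.mk_union_le _ _).trans (add_le_add ih (himg _))) (himg _))) hsmul).trans ?_
      simp only [add_eq_self hinf]
      exact le_rfl

lemma mk_latStagesUnion_le (s : Set W) : #(latStagesUnion s : Set W) ≤ #s + 𝔠 := by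
  have hinf : ℵ₀ ≤ #s + 𝔠 := aleph0_le_continuum.trans le_add_self
  have : #(⋃ n, latStages s n) ≤ ℵ₀ * (#s + 𝔠) := by
    refine (Cardinal.mk_iUnion_le _).trans ?_
    rw [Cardinal.mk_nat]
    exact mul_le_mul' le_rfl (ciSup_le' fun n => mk_latStages_le s n)
  exact this.trans ((Cardinal.mul_le_max _ _).trans (by simp [max_le hinf le_rfl, hinf]))

/-- Every point of the closure of `A` is the limit of a sequence in `A`. -/
lemma mk_closure_le_pow (A : Set W) : #(closure A) ≤ #A ^ ℵ₀ := by
  have h : ∀ x : closure A, ∃ u : ℕ → A, Filter.Tendsto (fun n => ((u n : W))) Filter.atTop (nhds (x : W)) := by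
    rintro ⟨x, hx⟩
    obtain ⟨u, hmem, hlim⟩ := mem_closure_iff_seq_limit.1 hx
    exact ⟨fun n => ⟨u n, hmem n⟩, hlim⟩
  choose v hv using h
  have hinj : Function.Injective v := by
    intro x y hxy
    have := hv x
    rw [hxy] at this
    exact Subtype.ext (tendsto_nhds_unique this (hv y))
  calc #(closure A) ≤ #(ℕ → A) := Cardinal.mk_le_of_injective hinj
    _ = #A ^ ℵ₀ := by rw [← Cardinal.power_def, Cardinal.mk_nat]

lemma mk_sublatticeSpanCl_le (s : Set W) : #(sublatticeSpanCl s : Set W) ≤ (#s + 𝔠) ^ ℵ₀ := by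
  have h1 : sublatticeSpan s ≤ latStagesUnion s :=
    sublatticeSpan_le (subset_latStagesUnion s) (sup_mem_latStagesUnion s)
  have h2 : (sublatticeSpanCl s : Set W) ⊆ closure (latStagesUnion s : Set W) :=
    closure_mono h1
  refine (Cardinal.mk_le_mk_of_subset h2).trans ?_
  exact (mk_closure_le_pow _).trans (Cardinal.power_le_power_right (mk_latStagesUnion_le s))

end Card

section FreeBL

open Cardinal

variable (X : Type) [NormedAddCommGroup X] [NormedSpace ℝ X] (C : Set X)

/-- A wrapper type with no instances, of cardinality `2 ^ (#X + 𝔠)`. -/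
structure Wrap (X : Type) : Type where
  w : Set (X ⊕ ℝ)

lemma mk_wrap : #(Wrap X) = 2 ^ (#X + 𝔠) := by
  have : #(Wrap X) = #(Set (X ⊕ ℝ)) := Cardinal.mk_congr ⟨Wrap.w, Wrap.mk, fun _ => rfl, fun _ => rfl⟩
  rw [this, Cardinal.mk_set, Cardinal.mk_sum, Cardinal.mk_real, Cardinal.lift_id, Cardinal.lift_id]

/-- An index for the family of test Banach lattices: a Banach lattice structure on a
subset of `Wrap X` together with a positive contraction from `X`. -/
structure Idx : Type where
  s : Set (Wrap X)
  [i1 : NormedLatticeAddCommGroup ↥s]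
  [i2 : NormedSpace ℝ ↥s]
  [i3 : CompleteSpace ↥s]
  φ : X →L[ℝ] ↥s
  hφ : ‖φ‖ ≤ 1
  hpos : ∀ x ∈ C, 0 ≤ φ x

instance (i : Idx X C) : NormedLatticeAddCommGroup ↥i.s := i.i1
instance (i : Idx X C) : NormedSpace ℝ ↥i.s := i.i2
instance (i : Idx X C) : CompleteSpace ↥i.s := i.i3

/-- The ambient `ℓ^∞`-product of all test Banach lattices. -/
abbrev FreeAmbient : Type := lp (fun i : Idx X C => ↥i.s) ∞

/-- The canonical map `X → FreeAmbient`. -/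
noncomputable def jraw : X →L[ℝ] FreeAmbient X C :=
  LinearMap.mkContinuous
    { toFun := fun x => ⟨fun i => i.φ x, memℓp_infty_of_bound ‖x‖ fun i =>
        (i.φ.le_opNorm x).trans (by
          calc ‖i.φ‖ * ‖x‖ ≤ 1 * ‖x‖ := by gcongr; exacts [i.hφ]
            _ = ‖x‖ := one_mul _)⟩
      map_add' := fun x y => lp.ext (funext fun i => by simp; rfl)
      map_smul' := fun r x => lp.ext (funext fun i => by simp) }
    1 (fun x => by
      refine (lp.norm_le_of_forall_le (by positivity : (0:ℝ) ≤ 1 * ‖x‖) fun i => ?_)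
      calc ‖i.φ x‖ ≤ ‖i.φ‖ * ‖x‖ := i.φ.le_opNorm x
        _ ≤ 1 * ‖x‖ := by gcongr; exacts [i.hφ])

lemma jraw_apply (x : X) (i : Idx X C) : (jraw X C x : ∀ i : Idx X C, ↥i.s) i = i.φ x := rfl

end FreeBL

section SmallCopy

open Cardinal

variable (X : Type) [NormedAddCommGroup X] [NormedSpace ℝ X] (C : Set X)

lemma exists_idx (G : Type) [NormedLatticeAddCommGroup G] [NormedSpace ℝ G] [CompleteSpace G]
    (φ : X →L[ℝ] G) (hφ : ‖φ‖ ≤ 1) (hpos : ∀ x ∈ C, 0 ≤ φ x) :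
    ∃ (i : Idx X C) (ρ : ↥i.s →L[ℝ] G), (∀ a : ↥i.s, ‖ρ a‖ = ‖a‖) ∧
      (∀ a b : ↥i.s, ρ (a ⊔ b) = ρ a ⊔ ρ b) ∧ ∀ x : X, ρ (i.φ x) = φ x := by
  classical
  set Gc : Submodule ℝ G := sublatticeSpanCl (Set.range φ) with hGc
  have hmem : ∀ x : X, φ x ∈ Gc := fun x => subset_sublatticeSpanCl _ ⟨x, rfl⟩
  -- cardinality bound
  have hcard : #↥Gc ≤ #(Wrap X) := by
    have h1 : #↥Gc ≤ (#(Set.range φ) + 𝔠) ^ (ℵ₀ : Cardinal) :=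
      mk_sublatticeSpanCl_le (Set.range φ)
    have h2 : (#(Set.range φ) + 𝔠) ≤ (#X + 𝔠) :=
      add_le_add_left Cardinal.mk_range_le _
    have hinf : (ℵ₀ : Cardinal) ≤ #X + 𝔠 := aleph0_le_continuum.trans le_add_self
    calc #↥Gc ≤ (#X + 𝔠) ^ (ℵ₀ : Cardinal) :=
          h1.trans (Cardinal.power_le_power_right h2)
      _ ≤ (2 ^ (#X + 𝔠)) ^ (ℵ₀ : Cardinal) :=
          Cardinal.power_le_power_right (Cardinal.cantor _).le
      _ = 2 ^ ((#X + 𝔠) * ℵ₀) := by rw [← Cardinal.power_mul]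
      _ = 2 ^ (#X + 𝔠) := by
          rw [Cardinal.mul_eq_max hinf le_rfl, max_eq_left (hinf)]
      _ = #(Wrap X) := (mk_wrap X).symm
  obtain ⟨f⟩ : Nonempty (↥Gc ↪ Wrap X) := Cardinal.le_def _ _ |>.1 hcard
  set s : Set (Wrap X) := Set.range f with hs
  let e : ↥s ≃ ↥Gc := (Equiv.ofInjective f f.injective).symm
  -- transport the Banach lattice structure of `↥Gc` to `↥s` along `e`
  letI : Zero ↥s := ⟨e.symm 0⟩
  letI : Add ↥s := ⟨fun a b => e.symm (e a + e b)⟩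
  letI : Neg ↥s := ⟨fun a => e.symm (-e a)⟩
  letI : Sub ↥s := ⟨fun a b => e.symm (e a - e b)⟩
  letI : SMul ℕ ↥s := ⟨fun n a => e.symm (n • e a)⟩
  letI : SMul ℤ ↥s := ⟨fun n a => e.symm (n • e a)⟩
  letI : SMul ℝ ↥s := ⟨fun r a => e.symm (r • e a)⟩
  letI : Max ↥s := ⟨fun a b => e.symm (e a ⊔ e b)⟩
  letI : Min ↥s := ⟨fun a b => e.symm (e a ⊓ e b)⟩
  have hzero : e 0 = 0 := e.apply_symm_apply 0
  have hadd : ∀ a b : ↥s, e (a + b) = e a + e b := fun a b => e.apply_symm_apply _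
  have hneg : ∀ a : ↥s, e (-a) = -e a := fun a => e.apply_symm_apply _
  have hsub : ∀ a b : ↥s, e (a - b) = e a - e b := fun a b => e.apply_symm_apply _
  have hnsmul : ∀ (a : ↥s) (n : ℕ), e (n • a) = n • e a := fun a n => e.apply_symm_apply _
  have hzsmul : ∀ (a : ↥s) (n : ℤ), e (n • a) = n • e a := fun a n => e.apply_symm_apply _
  have hsmul : ∀ (r : ℝ) (a : ↥s), e (r • a) = r • e a := fun r a => e.apply_symm_apply _
  have hsup : ∀ a b : ↥s, e (a ⊔ b) = e a ⊔ e b := fun a b => e.apply_symm_apply _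
  have hinf : ∀ a b : ↥s, e (a ⊓ b) = e a ⊓ e b := fun a b => e.apply_symm_apply _
  letI : AddCommGroup ↥s :=
    e.injective.addCommGroup e hzero hadd hneg hsub hnsmul hzsmul
  letI : LE ↥s := ⟨fun a b => e a ≤ e b⟩
  letI : LT ↥s := ⟨fun a b => e a < e b⟩
  letI : Lattice ↥s := e.injective.lattice e Iff.rfl Iff.rfl hsup hinf
  have hle : ∀ a b : ↥s, a ≤ b ↔ e a ≤ e b := fun _ _ => Iff.rfl
  let eAdd : ↥s →+ ↥Gc := AddMonoidHom.mk' e hadd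
  letI : Module ℝ ↥s := Function.Injective.module ℝ eAdd e.injective hsmul
  letI nacg : NormedAddCommGroup ↥s := NormedAddCommGroup.induced ↥s ↥Gc eAdd e.injective
  have hnorm : ∀ a : ↥s, ‖a‖ = ‖e a‖ := fun _ => rfl
  letI : NormedSpace ℝ ↥s := ⟨fun r a => by
    rw [hnorm, hsmul, norm_smul, ← hnorm]⟩
  letI : NormedLatticeAddCommGroup ↥s :=
    { nacg, (inferInstance : Lattice ↥s) with
      add_le_add_left := fun a b h c => by
        rw [hle] at h ⊢
        rw [hadd, hadd]
        exact add_le_add_right h _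
      solid := fun a b h => by
        have habs : ∀ a : ↥s, e |a| = |e a| := fun a => by
          show e (a ⊔ -a) = e a ⊔ -(e a)
          rw [hsup, hneg]
        rw [hle, habs, habs] at h
        rw [hnorm, hnorm]
        exact HasSolidNorm.solid h }
  have hiso : Isometry ⇑e := AddMonoidHomClass.isometry_of_norm eAdd fun x => rfl
  letI : CompleteSpace ↥s := (IsometryEquiv.mk e hiso).completeSpace
  -- the maps back and forth
  let ℓ : ↥s →L[ℝ] ↥Gc :=
    LinearMap.mkContinuous { toFun := e, map_add' := hadd, map_smul' := hsmul } 1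
      (fun a => by rw [one_mul]; exact le_of_eq rfl)
  have hℓsymm : ∀ a b : ↥s, e.symm (e a + e b) = a + b := fun _ _ => rfl
  let ℓ' : ↥Gc →L[ℝ] ↥s :=
    LinearMap.mkContinuous
      { toFun := e.symm
        map_add' := fun x y => e.injective (by
          rw [hadd, e.apply_symm_apply, e.apply_symm_apply, e.apply_symm_apply])
        map_smul' := fun r x => e.injective (by
          rw [hsmul, e.apply_symm_apply, e.apply_symm_apply]; rfl) } 1
      (fun x => by
        rw [one_mul]
        show ‖e (e.symm x)‖ ≤ ‖x‖
        rw [e.apply_symm_apply])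
  let φGc : X →L[ℝ] ↥Gc := φ.codRestrict Gc hmem
  have hφGc : ∀ x, (φGc x : G) = φ x := fun _ => rfl
  let φ' : X →L[ℝ] ↥s := ℓ'.comp φGc
  have hφ'apply : ∀ x, φ' x = e.symm (φGc x) := fun _ => rfl
  have hφ' : ‖φ'‖ ≤ 1 := by
    refine ContinuousLinearMap.opNorm_le_bound _ zero_le_one fun x => ?_
    rw [one_mul, hφ'apply, hnorm, e.apply_symm_apply]
    show ‖φ x‖ ≤ ‖x‖
    exact (φ.le_opNorm x).trans (by calc ‖φ‖ * ‖x‖ ≤ 1 * ‖x‖ := by gcongr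
                                      _ = ‖x‖ := one_mul _)
  have hpos' : ∀ x ∈ C, (0 : ↥s) ≤ φ' x := by
    intro x hx
    rw [hle, hzero, hφ'apply, e.apply_symm_apply]
    show (0 : G) ≤ φ x
    exact hpos x hx
  let i : Idx X C := { s := s, φ := φ', hφ := hφ', hpos := hpos' }
  let ρ : ↥i.s →L[ℝ] G := Gc.subtypeL.comp ℓ
  refine ⟨i, ρ, fun a => ?_, fun a b => ?_, fun x => ?_⟩
  · show ‖(e a : G)‖ = ‖a‖
    rw [hnorm]
    rfl
  · show ((e (a ⊔ b) : ↥Gc) : G) = ((e a : ↥Gc) : G) ⊔ ((e b : ↥Gc) : G)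
    rw [hsup]
    rfl
  · show ((e (e.symm (φGc x)) : ↥Gc) : G) = φ x
    rw [e.apply_symm_apply]
    exact hφGc x

end SmallCopy



/-- A wedge in a real vector space. -/
def IsWedge {V : Type} [AddCommGroup V] [Module ℝ V] (C : Set V) : Prop :=
  0 ∈ C ∧ ∀ (a b : ℝ) (x y : V), 0 ≤ a → 0 ≤ b → x ∈ C → y ∈ C → a • x + b • y ∈ C

/-- The positive part of the dual unit ball of the pre-ordered Banach space `(X, C)`:
continuous linear functionals of norm at most 1 that are nonnegative on `C`. -/
def PosDualBall {X : Type} [NormedAddCommGroup X] [NormedSpace ℝ X] (C : Set X)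
    (f : X →L[ℝ] ℝ) : Prop :=
  ‖f‖ ≤ 1 ∧ ∀ x ∈ C, 0 ≤ f x

/-- `(j, F)` is a free Banach lattice over the pre-ordered Banach space `(X, C)`:
`j` is a positive contraction, and every positive contraction from `X` into a Banach
lattice factors uniquely through `j` via a contractive vector lattice homomorphism. -/
def IsFreeBanachLattice (X : Type) [NormedAddCommGroup X] [NormedSpace ℝ X]
    [CompleteSpace X] (C : Set X)
    (F : Type) [NormedLatticeAddCommGroup F] [NormedSpace ℝ F] [CompleteSpace F]
    (j : X →L[ℝ] F) : Prop :=
  ‖j‖ ≤ 1 ∧ (∀ x ∈ C, 0 ≤ j x) ∧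
  ∀ (G : Type) [NormedLatticeAddCommGroup G] [NormedSpace ℝ G] [CompleteSpace G],
    ∀ φ : X →L[ℝ] G, ‖φ‖ ≤ 1 → (∀ x ∈ C, 0 ≤ φ x) →
      ∃! ψ : F →L[ℝ] G, ‖ψ‖ ≤ 1 ∧ (∀ a b : F, ψ (a ⊔ b) = ψ a ⊔ ψ b) ∧
        ∀ x : X, ψ (j x) = φ x

/-- A bundled free Banach lattice over the pre-ordered Banach space `(X, C)`. -/
structure FreeBanachLatticeWitness (X : Type) [NormedAddCommGroup X] [NormedSpace ℝ X]
    [CompleteSpace X] (C : Set X) where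
  F : Type
  [i1 : NormedLatticeAddCommGroup F]
  [i2 : NormedSpace ℝ F]
  [i3 : CompleteSpace F]
  j : X →L[ℝ] F
  free : IsFreeBanachLattice X C F j

/-- Every pre-ordered Banach space admits a free Banach lattice over it. -/
theorem exists_free_banach_lattice
    (X : Type) [NormedAddCommGroup X] [NormedSpace ℝ X] [CompleteSpace X]
    (C : Set X) (hC : IsWedge C) :
    Nonempty (FreeBanachLatticeWitness X C) := by
  classical
  set P := FreeAmbient X C with hP
  set Fc : Submodule ℝ P := sublatticeSpanCl (Set.range (jraw X C)) with hFc
  have hjmem : ∀ x : X, jraw X C x ∈ Fc := fun x => subset_sublatticeSpanCl _ ⟨x, rfl⟩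
  set j : X →L[ℝ] ↥Fc := (jraw X C).codRestrict Fc hjmem with hj
  have hjcoe : ∀ x : X, ((j x : ↥Fc) : P) = jraw X C x := fun _ => rfl
  -- the coordinate projections
  let proj : ∀ i : Idx X C, P →L[ℝ] ↥i.s := fun i =>
    LinearMap.mkContinuous
      { toFun := fun a => a i
        map_add' := fun a b => rfl
        map_smul' := fun r a => rfl } 1
      (fun a => by rw [one_mul]; exact lp.norm_apply_le_norm ENNReal.top_ne_zero a i)
  have hproj : ∀ (i : Idx X C) (a : P), proj i a = a i := fun _ _ => rfl
  refine ⟨{ F := ↥Fc, j := j, free := ⟨?_, ?_, ?_⟩ }⟩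
  · -- contractivity of j
    refine ContinuousLinearMap.opNorm_le_bound _ zero_le_one fun x => ?_
    show ‖jraw X C x‖ ≤ 1 * ‖x‖
    exact (jraw X C).le_opNorm x |>.trans (by
      gcongr
      exact LinearMap.mkContinuous_norm_le _ zero_le_one _)
  · -- positivity of j
    intro x hx
    rw [scl_le_iff]
    show (0 : P) ≤ (jraw X C x : P)
    intro i
    show (0 : P) i ≤ i.φ x
    rw [lp.coeFn_zero]
    exact i.hpos x hx
  · -- universal property
    intro G instG1 instG2 instG3 φ hφ1 hφ2
    obtain ⟨i, ρ, hρn, hρsup, hρφ⟩ := exists_idx X C G φ hφ1 hφ2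
    set ψ : ↥Fc →L[ℝ] G := ρ.comp ((proj i).comp Fc.subtypeL) with hψ
    have hψapply : ∀ a : ↥Fc, ψ a = ρ ((a : P) i) := fun _ => rfl
    have hψ1 : ‖ψ‖ ≤ 1 := by
      refine ContinuousLinearMap.opNorm_le_bound _ zero_le_one fun a => ?_
      rw [one_mul, hψapply, hρn]
      exact lp.norm_apply_le_norm ENNReal.top_ne_zero (a : P) i
    have hψsup : ∀ a b : ↥Fc, ψ (a ⊔ b) = ψ a ⊔ ψ b := by
      intro a b
      rw [hψapply, hψapply, hψapply]
      have h1 : ((a ⊔ b : ↥Fc) : P) = (a : P) ⊔ (b : P) := scl_coe_sup a b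
      rw [h1]
      have h2 : ((a : P) ⊔ (b : P)) i = (a : P) i ⊔ (b : P) i := rfl
      rw [h2, hρsup]
    have hψj : ∀ x : X, ψ (j x) = φ x := by
      intro x
      rw [hψapply, hjcoe]
      exact hρφ x
    refine ⟨ψ, ⟨hψ1, hψsup, hψj⟩, ?_⟩
    -- uniqueness
    rintro ψ' ⟨hψ'1, hψ'sup, hψ'j⟩
    set K : Submodule ℝ P :=
      (LinearMap.eqLocus (ψ' : ↥Fc →ₗ[ℝ] G) (ψ : ↥Fc →ₗ[ℝ] G)).map Fc.subtype with hK
    have hKs : Set.range (jraw X C) ⊆ (K : Set P) := by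
      rintro _ ⟨x, rfl⟩
      exact ⟨j x, by show ψ' (j x) = ψ (j x); rw [hψ'j, hψj], rfl⟩
    have hKsup : ∀ ⦃a b : P⦄, a ∈ K → b ∈ K → a ⊔ b ∈ K := by
      rintro _ _ ⟨a, ha, rfl⟩ ⟨b, hb, rfl⟩
      refine ⟨a ⊔ b, ?_, (scl_coe_sup a b)⟩
      show ψ' (a ⊔ b) = ψ (a ⊔ b)
      rw [hψ'sup, hψsup]
      rw [show ψ' a = ψ a from ha, show ψ' b = ψ b from hb]
    have hKclosed : IsClosed (K : Set P) := by
      have heq : (K : Set P) = Subtype.val '' {a : ↥Fc | ψ' a = ψ a} := by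
        ext p
        constructor
        · rintro ⟨a, ha, rfl⟩; exact ⟨a, ha, rfl⟩
        · rintro ⟨a, ha, rfl⟩; exact ⟨a, ha, rfl⟩
      rw [heq]
      have h1 : IsClosed {a : ↥Fc | ψ' a = ψ a} := isClosed_eq ψ'.continuous ψ.continuous
      exact ((isClosed_sublatticeSpanCl _).isClosedEmbedding_subtypeVal).isClosedMap _ h1
    have hle : Fc ≤ K := sublatticeSpanCl_le hKs hKsup hKclosed
    ext a
    obtain ⟨b, hb, hba⟩ := hle a.2
    have : b = a := Subtype.ext hba
    rw [← this]
    exact hb
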